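/- Suppose u is analytic on the unit disc, bounded away from zero (inf_D |u| > 0), a multiplier of the Bloch space, and φ is an automorphism of the disc. Then for all n ≥ 1, the multiplication operator M_{u_{(n)}} on the Bloch space satisfies ‖M_{u_{(n)}}‖_{B→B} ≤ [‖M_{u'}‖_{B→H^∞_{v_1}}·‖1/u‖_∞ + 2] · n · (1 + n·ρ(φ^{-1}(0),0)) · ‖u_{(n)}‖_∞. -/

import Mathlib

open Complex Metric Set Filter MeasureTheory Finset

noncomputable section

/-- The open unit disc in ℂ. -/
def D1 : Set ℂ := Metric.ball 0 1

/-- Analytic (holomorphic) on the open unit disc. -/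
def AnalyticOnD (f : ℂ → ℂ) : Prop := DifferentiableOn ℂ f D1

/-- Bloch seminorm. -/
def blochSemi (f : ℂ → ℂ) : ℝ := ⨆ z : D1, (1 - ‖(z : ℂ)‖ ^ 2) * ‖deriv f (z : ℂ)‖

/-- Bloch norm. -/
def blochNorm (f : ℂ → ℂ) : ℝ := ‖f 0‖ + blochSemi f

/-- Membership in the Bloch space. -/
def InBloch (f : ℂ → ℂ) : Prop :=
  AnalyticOnD f ∧ ∃ C, ∀ z ∈ D1, (1 - ‖z‖ ^ 2) * ‖deriv f z‖ ≤ C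

/-- Sup norm over the unit disc. -/
def supNormD (f : ℂ → ℂ) : ℝ := ⨆ z : D1, ‖f (z : ℂ)‖

/-- Weighted composition operator uC_φ. -/
def wco (u φ : ℂ → ℂ) (f : ℂ → ℂ) : ℂ → ℂ := fun z => u z * f (φ z)

/-- Multiplication operator M_u. -/
def mult (u : ℂ → ℂ) (f : ℂ → ℂ) : ℂ → ℂ := fun z => u z * f z

/-- The weight u_{(n)} = ∏_{j=0}^{n-1} u ∘ φ_j. -/
def wprod (u φ : ℂ → ℂ) (n : ℕ) : ℂ → ℂ := fun z => ∏ j ∈ Finset.range n, u (φ^[j] z)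

/-- Boundedness of an operator on the Bloch space. -/
def BddOnBloch (T : (ℂ → ℂ) → (ℂ → ℂ)) : Prop :=
  ∃ C, ∀ f, InBloch f → InBloch (T f) ∧ blochNorm (T f) ≤ C * blochNorm f

/-- Operator norm on the Bloch space. -/
def opNormB (T : (ℂ → ℂ) → (ℂ → ℂ)) : ℝ :=
  sInf {C : ℝ | 0 ≤ C ∧ ∀ f, InBloch f → blochNorm (T f) ≤ C * blochNorm f}

/-- Invertibility of an operator on the Bloch space (bounded two-sided inverse). -/
def InvertibleOnBloch (T : (ℂ → ℂ) → (ℂ → ℂ)) : Prop :=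
  BddOnBloch T ∧ ∃ S, BddOnBloch S ∧
    ∀ f, InBloch f → Set.EqOn (S (T f)) f D1 ∧ Set.EqOn (T (S f)) f D1

/-- Spectrum of an operator acting on the Bloch space. -/
def blochSpectrum (T : (ℂ → ℂ) → (ℂ → ℂ)) : Set ℂ :=
  {lam | ¬ InvertibleOnBloch (fun f z => lam * f z - T f z)}

/-- Automorphism of the unit disc (Möbius form). -/
def IsDiscAuto (φ : ℂ → ℂ) : Prop :=
  ∃ lam a : ℂ, ‖lam‖ = 1 ∧ a ∈ D1 ∧ ∀ z, φ z = lam * (a - z) / (1 - (starRingEnd ℂ) a * z)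

/-- Hyperbolic distance on the unit disc. -/
def hypDist (z w : ℂ) : ℝ :=
  (1 / 2) * Real.log ((1 + ‖(z - w) / (1 - (starRingEnd ℂ) z * w)‖) /
    (1 - ‖(z - w) / (1 - (starRingEnd ℂ) z * w)‖))

/-- The disc algebra A(𝔻). -/
def InDiscAlgebra (u : ℂ → ℂ) : Prop :=
  ContinuousOn u (Metric.closedBall 0 1) ∧ AnalyticOnD u

/-- u is bounded away from zero on the unit disc. -/
def BoundedAwayFromZero (u : ℂ → ℂ) : Prop := ∃ δ > 0, ∀ z ∈ D1, δ ≤ ‖u z‖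

/-- Parabolic automorphism with unique fixed point a on the unit circle (φ'(a)=1). -/
def IsParabolicAuto (φ : ℂ → ℂ) (a : ℂ) : Prop :=
  IsDiscAuto φ ∧ ‖a‖ = 1 ∧ φ a = a ∧ deriv φ a = 1 ∧
    ∀ w, ‖w‖ ≤ 1 → φ w = w → w = a

/-- Hyperbolic automorphism with attractive fixed point a and repulsive fixed point b. -/
def IsHyperbolicAuto (φ : ℂ → ℂ) (a b : ℂ) : Prop :=
  IsDiscAuto φ ∧ ‖a‖ = 1 ∧ ‖b‖ = 1 ∧ a ≠ b ∧ φ a = a ∧ φ b = b ∧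
    ∃ μ : ℝ, 0 < μ ∧ μ < 1 ∧ deriv φ a = (μ : ℂ)

/-- Square of the Dirichlet norm (normalized area measure on 𝔻). -/
def dirichletNormSq (f : ℂ → ℂ) : ℝ :=
  ‖f 0‖ ^ 2 + (1 / Real.pi) * ∫ z in D1, ‖deriv f z‖ ^ 2

/-- Dirichlet norm. -/
def dirichletNorm (f : ℂ → ℂ) : ℝ := Real.sqrt (dirichletNormSq f)

/-- Membership in the Dirichlet space. -/
def InDirichlet (f : ℂ → ℂ) : Prop :=
  AnalyticOnD f ∧ MeasureTheory.IntegrableOn (fun z => ‖deriv f z‖ ^ 2) D1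

/-- Boundedness of an operator on the Dirichlet space. -/
def BddOnDirichlet (T : (ℂ → ℂ) → (ℂ → ℂ)) : Prop :=
  ∃ C, ∀ f, InDirichlet f → InDirichlet (T f) ∧ dirichletNorm (T f) ≤ C * dirichletNorm f

/-- Operator norm on the Dirichlet space. -/
def opNormDir (T : (ℂ → ℂ) → (ℂ → ℂ)) : ℝ :=
  sInf {C : ℝ | 0 ≤ C ∧ ∀ f, InDirichlet f → dirichletNorm (T f) ≤ C * dirichletNorm f}

/-- Invertibility of an operator on the Dirichlet space. -/
def InvertibleOnDirichlet (T : (ℂ → ℂ) → (ℂ → ℂ)) : Prop :=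
  BddOnDirichlet T ∧ ∃ S, BddOnDirichlet S ∧
    ∀ f, InDirichlet f → Set.EqOn (S (T f)) f D1 ∧ Set.EqOn (T (S f)) f D1

/-- Spectrum of an operator on the Dirichlet space. -/
def dirichletSpectrum (T : (ℂ → ℂ) → (ℂ → ℂ)) : Set ℂ :=
  {lam | ¬ InvertibleOnDirichlet (fun f z => lam * f z - T f z)}

/-- Operator norm of M_{u'} : B → H^∞_{v₁}. -/
def opNormBtoHv1 (u : ℂ → ℂ) : ℝ :=
  sInf {C : ℝ | 0 ≤ C ∧ ∀ f, InBloch f → ∀ z ∈ D1,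
    (1 - ‖z‖ ^ 2) * ‖deriv u z * f z‖ ≤ C * blochNorm f}

/-- Operator norm of M_{u'} : 𝒟 → A². -/
def opNormDtoA2 (u : ℂ → ℂ) : ℝ :=
  sInf {C : ℝ | 0 ≤ C ∧ ∀ f, InDirichlet f →
    Real.sqrt ((1 / Real.pi) * ∫ z in D1, ‖deriv u z * f z‖ ^ 2) ≤ C * dirichletNorm f}

/-- The logarithmic weight log(e/(1-|z|²)). -/
def logWeight (z : ℂ) : ℝ := Real.log (Real.exp 1 / (1 - ‖z‖ ^ 2))

/-- Characterization of multipliers of the Bloch space: u ∈ H^∞ and the log condition. -/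
def MultBChar (u : ℂ → ℂ) : Prop :=
  (∃ M, ∀ z ∈ D1, ‖u z‖ ≤ M) ∧
  (∃ M, ∀ z ∈ D1, (1 - ‖z‖ ^ 2) * ‖deriv u z‖ * logWeight z ≤ M)


/-! ### Auxiliary lemmas -/

lemma mem_D1 {z : ℂ} : z ∈ D1 ↔ ‖z‖ < 1 := by
  simp [D1, Metric.mem_ball, dist_zero_right]

lemma zero_mem_D1 : (0:ℂ) ∈ D1 := by simp [mem_D1]

instance : Nonempty D1 := ⟨⟨0, zero_mem_D1⟩⟩

lemma one_sub_sq_pos {z : ℂ} (hz : z ∈ D1) : 0 < 1 - ‖z‖^2 := by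
  rw [mem_D1] at hz; nlinarith [norm_nonneg z]

lemma key_id (a z : ℂ) :
    ‖(1:ℂ) - (starRingEnd ℂ) a * z‖^2 - ‖a - z‖^2 = (1-‖a‖^2)*(1-‖z‖^2) := by
  obtain ⟨x, y⟩ := a; obtain ⟨p, q⟩ := z
  simp [Complex.sq_norm, Complex.normSq_apply, Complex.mul_re,
    Complex.mul_im, Complex.sub_re, Complex.sub_im]
  ring

lemma denom_ne {a z : ℂ} (ha : a ∈ D1) (hz : z ∈ D1) :
    (1:ℂ) - (starRingEnd ℂ) a * z ≠ 0 := by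
  intro h
  have h2 : (starRingEnd ℂ) a * z = 1 := by linear_combination -h
  have : ‖(starRingEnd ℂ) a * z‖ < 1 := by
    rw [norm_mul, RCLike.norm_conj]
    rw [mem_D1] at ha hz
    nlinarith [norm_nonneg a, norm_nonneg z]
  rw [h2] at this; simp at this

/-- Good self-map of the disc with Schwarz-Pick equality. -/
def Good (h : ℂ → ℂ) : Prop :=
  ∀ z ∈ D1, h z ∈ D1 ∧ ∃ d : ℂ, HasDerivAt h d z ∧ 1-‖h z‖^2 = ‖d‖ * (1-‖z‖^2)

lemma Good.comp {g h : ℂ → ℂ} (hg : Good g) (hh : Good h) : Good (g ∘ h) := by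
  intro z hz
  obtain ⟨hmem, d, hd, hsp⟩ := hh z hz
  obtain ⟨hmem', e, he, hsp'⟩ := hg (h z) hmem
  refine ⟨hmem', e * d, he.comp z hd, ?_⟩
  simp only [Function.comp_apply] at *
  rw [hsp', hsp, norm_mul]; ring

lemma good_mobius {lam a : ℂ} (hl : ‖lam‖ = 1) (ha : a ∈ D1) :
    Good (fun z => lam * (a - z) / (1 - (starRingEnd ℂ) a * z)) := by
  intro z hz
  have hda := one_sub_sq_pos ha
  have hdz := one_sub_sq_pos hz
  have hne := denom_ne ha hz
  have hnormden : (0:ℝ) < ‖(1:ℂ) - (starRingEnd ℂ) a * z‖ := norm_pos_iff.mpr hne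
  constructor
  · rw [mem_D1]
    rw [norm_div, norm_mul, hl, one_mul, div_lt_one hnormden]
    have := key_id a z
    nlinarith [norm_nonneg (a - z), norm_nonneg ((1:ℂ) - (starRingEnd ℂ) a * z)]
  · refine ⟨lam * (((Complex.normSq a : ℂ)) - 1) / (1 - (starRingEnd ℂ) a * z)^2, ?_, ?_⟩
    · have h1 : HasDerivAt (fun z : ℂ => lam * (a - z)) (-lam) z := by
        simpa using ((hasDerivAt_id z).const_sub a).const_mul lam
      have h2 : HasDerivAt (fun z : ℂ => (1:ℂ) - (starRingEnd ℂ) a * z)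
          (-((starRingEnd ℂ) a)) z := by
        simpa using (((hasDerivAt_id z).const_mul ((starRingEnd ℂ) a)).const_sub 1)
      have := h1.div h2 hne
      convert! this using 1
      field_simp
      rw [← Complex.mul_conj]
      ring
    · have hnum : ‖lam * (((Complex.normSq a : ℂ)) - 1)‖ = 1 - ‖a‖^2 := by
        rw [norm_mul, hl, one_mul]
        have h1 : Complex.normSq a = ‖a‖^2 := by
          rw [Complex.sq_norm]
        have : ((Complex.normSq a : ℂ)) - 1 = ((‖a‖^2 - 1 : ℝ) : ℂ) := by
          push_cast [h1]; ring
        rw [this, Complex.norm_real, Real.norm_eq_abs, abs_of_neg (by linarith)]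
        ring
      rw [norm_div, norm_div, norm_mul, hl, one_mul, hnum]
      have hkey := key_id a z
      have hsq : ‖((1:ℂ) - (starRingEnd ℂ) a * z)^2‖ = ‖(1:ℂ) - (starRingEnd ℂ) a * z‖^2 :=
        norm_pow _ 2
      rw [hsq]
      have hB2 : (‖(1:ℂ) - (starRingEnd ℂ) a * z‖^2) ≠ 0 :=
        pow_ne_zero 2 (ne_of_gt hnormden)
      rw [div_pow, div_mul_eq_mul_div, eq_div_iff hB2, sub_mul, one_mul,
        div_mul_cancel₀ _ hB2]
      linarith [hkey]

lemma good_id : Good id := by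
  intro z hz
  exact ⟨hz, 1, hasDerivAt_id z, by simp⟩

lemma Good.iterate {h : ℂ → ℂ} (hh : Good h) (n : ℕ) : Good (h^[n]) := by
  induction n with
  | zero => simpa using good_id
  | succ n ih => rw [Function.iterate_succ']; exact hh.comp ih

lemma sub_ne_zero_of_norm_lt {x y : ℂ} (h : ‖y‖ < ‖x‖) : x - y ≠ 0 := by
  intro hxy
  have : x = y := by linear_combination hxy
  rw [this] at h; exact lt_irrefl _ h

lemma good_psi {lam a : ℂ} (hl : ‖lam‖ = 1) (ha : a ∈ D1) :
    Good (fun w => (lam * a - w) / (lam - (starRingEnd ℂ) a * w)) := by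
  have hlne : lam ≠ 0 := by intro h; rw [h] at hl; simp at hl
  have hrot : Good (fun w : ℂ => lam⁻¹ * w) := by
    have h1 : ‖-(lam⁻¹)‖ = 1 := by
      rw [norm_neg, norm_inv, hl]; norm_num
    have := good_mobius h1 zero_mem_D1
    convert this using 2 with w
    simp
  have hmob := good_mobius (lam := 1) (a := a) (by simp) ha
  have := hmob.comp hrot
  convert this using 2 with w
  simp only [Function.comp_apply, one_mul]
  have h2 : lam * a - w = lam * (a - lam⁻¹ * w) := by
    field_simp
  have h3 : lam - (starRingEnd ℂ) a * w = lam * (1 - (starRingEnd ℂ) a * (lam⁻¹ * w)) := by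
    field_simp
  rw [h2, h3, mul_div_mul_left _ _ hlne]

lemma psi_phi {lam a : ℂ} (hl : ‖lam‖ = 1) (ha : a ∈ D1) {z : ℂ} (hz : z ∈ D1) :
    (fun w => (lam * a - w) / (lam - (starRingEnd ℂ) a * w))
      (lam * (a - z) / (1 - (starRingEnd ℂ) a * z)) = z := by
  have hd1 := denom_ne ha hz
  have hφz : lam * (a - z) / (1 - (starRingEnd ℂ) a * z) ∈ D1 :=
    ((good_mobius hl ha) z hz).1
  have hd2 : lam - (starRingEnd ℂ) a * (lam * (a - z) / (1 - (starRingEnd ℂ) a * z)) ≠ 0 := by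
    apply sub_ne_zero_of_norm_lt
    rw [hl, norm_mul, RCLike.norm_conj]
    rw [mem_D1] at ha hφz
    nlinarith [norm_nonneg a, norm_nonneg (lam * (a - z) / (1 - (starRingEnd ℂ) a * z))]
  simp only
  rw [div_eq_iff hd2]
  have hd1' : 1 - z * (starRingEnd ℂ) a ≠ 0 := by rw [mul_comm]; exact hd1
  field_simp
  ring

lemma blochSemi_nonneg (f : ℂ → ℂ) : 0 ≤ blochSemi f :=
  Real.iSup_nonneg fun z => mul_nonneg (le_of_lt (one_sub_sq_pos z.2)) (norm_nonneg _)

lemma blochNorm_nonneg (f : ℂ → ℂ) : 0 ≤ blochNorm f :=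
  add_nonneg (norm_nonneg _) (blochSemi_nonneg f)

lemma le_blochSemi {f : ℂ → ℂ} (hf : InBloch f) {z : ℂ} (hz : z ∈ D1) :
    (1 - ‖z‖^2) * ‖deriv f z‖ ≤ blochSemi f := by
  obtain ⟨C, hC⟩ := hf.2
  exact le_ciSup (f := fun z : D1 => (1 - ‖(z:ℂ)‖^2) * ‖deriv f (z:ℂ)‖)
    ⟨C, by rintro _ ⟨y, rfl⟩; exact hC y y.2⟩ ⟨z, hz⟩

lemma blochSemi_le {f : ℂ → ℂ} {C : ℝ}
    (h : ∀ z ∈ D1, (1 - ‖z‖^2) * ‖deriv f z‖ ≤ C) : blochSemi f ≤ C :=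
  ciSup_le fun z => h z z.2

lemma supNormD_nonneg (f : ℂ → ℂ) : 0 ≤ supNormD f :=
  Real.iSup_nonneg fun _ => norm_nonneg _

lemma le_supNormD {f : ℂ → ℂ} {C : ℝ} (hC : ∀ z ∈ D1, ‖f z‖ ≤ C) {z : ℂ} (hz : z ∈ D1) :
    ‖f z‖ ≤ supNormD f :=
  le_ciSup (f := fun z : D1 => ‖f (z:ℂ)‖)
    ⟨C, by rintro _ ⟨y, rfl⟩; exact hC y y.2⟩ ⟨z, hz⟩

lemma logWeight_eq {z : ℂ} (hz : z ∈ D1) :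
    logWeight z = 1 - Real.log (1 - ‖z‖^2) := by
  rw [logWeight, Real.log_div (Real.exp_ne_zero 1) (one_sub_sq_pos hz).ne', Real.log_exp]

lemma one_le_logWeight {z : ℂ} (hz : z ∈ D1) : 1 ≤ logWeight z := by
  rw [logWeight_eq hz]
  have h1 : Real.log (1 - ‖z‖^2) ≤ 0 :=
    Real.log_nonpos (le_of_lt (one_sub_sq_pos hz)) (by nlinarith [norm_nonneg z])
  linarith

lemma A_le_logWeight {z : ℂ} (hz : z ∈ D1) :
    (1/2) * Real.log ((1 + ‖z‖)/(1 - ‖z‖)) ≤ logWeight z := by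
  set r := ‖z‖ with hr
  have hr1 : r < 1 := mem_D1.mp hz
  have hr0 : (0:ℝ) ≤ r := norm_nonneg z
  have hd : 0 < 1 - r^2 := one_sub_sq_pos hz
  have he : (2:ℝ) ≤ Real.exp 1 := by
    have := Real.add_one_le_exp 1
    linarith
  have key : (1 + r)/(1 - r) ≤ (Real.exp 1 / (1 - r^2))^2 := by
    rw [div_pow, div_le_div_iff₀ (by linarith) (by positivity)]
    have h5 : (1+r)^2 ≤ 4 := by nlinarith
    have h6 : 1 - r^2 ≤ 1 := by nlinarith
    have hb : (1 - r^2)*(1+r)^2 ≤ 4 := by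
      calc (1 - r^2)*(1+r)^2 ≤ 1 * 4 := by
            apply mul_le_mul h6 h5 (by positivity) (by norm_num)
      _ = 4 := by norm_num
    have hstep : (1-r)*((1-r^2)*(1+r)^2) ≤ (1-r)*4 :=
      mul_le_mul_of_nonneg_left hb (by linarith)
    have he2 : (4:ℝ) ≤ Real.exp 1^2 := by nlinarith
    calc (1+r)*(1-r^2)^2 = (1-r)*((1-r^2)*(1+r)^2) := by ring
    _ ≤ (1-r)*4 := hstep
    _ ≤ Real.exp 1^2*(1-r) := by nlinarith [he2]
  have hpos : (0:ℝ) < (1 + r)/(1 - r) := div_pos (by linarith) (by linarith)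
  have := Real.log_le_log hpos key
  rw [Real.log_pow] at this
  have hlw : logWeight z = Real.log (Real.exp 1 / (1 - r^2)) := rfl
  rw [hlw]
  push_cast at this
  linarith

/-- Growth estimate for Bloch functions. -/
lemma growth {f : ℂ → ℂ} (hf : DifferentiableOn ℂ f D1) {s : ℝ}
    (hs : ∀ z ∈ D1, (1 - ‖z‖^2) * ‖deriv f z‖ ≤ s) {w : ℂ} (hw : w ∈ D1) :
    ‖f w - f 0‖ ≤ s * ((1/2) * Real.log ((1 + ‖w‖)/(1 - ‖w‖))) := by
  set r : ℝ := ‖w‖ with hr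
  have hr1 : r < 1 := mem_D1.mp hw
  have hr0 : (0:ℝ) ≤ r := norm_nonneg w
  have hs0 : 0 ≤ s := by
    have h00 := hs 0 zero_mem_D1
    simp at h00
    exact le_trans (norm_nonneg _) h00
  have hopen : IsOpen D1 := Metric.isOpen_ball
  have han : AnalyticOnNhd ℂ f D1 := hf.analyticOnNhd hopen
  have hdc : ContinuousOn (deriv f) D1 := (han.deriv).continuousOn
  have hmem : ∀ t : ℝ, t ∈ Set.uIcc (0:ℝ) 1 → (t:ℂ) * w ∈ D1 := by
    intro t ht
    rw [Set.uIcc_of_le (by norm_num : (0:ℝ) ≤ 1)] at ht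
    rw [mem_D1, norm_mul, Complex.norm_real, Real.norm_eq_abs, _root_.abs_of_nonneg ht.1]
    calc t * r ≤ 1 * r := by nlinarith [ht.2]
    _ < 1 := by nlinarith
  have hg : ∀ t : ℝ, t ∈ Set.uIcc (0:ℝ) 1 →
      HasDerivAt (fun t : ℝ => f ((t:ℂ) * w)) (deriv f ((t:ℂ) * w) * w) t := by
    intro t ht
    have h1 : HasDerivAt (fun z : ℂ => z * w) w ((t:ℝ):ℂ) := by
      simpa using (hasDerivAt_id ((t:ℝ):ℂ)).mul_const w
    have h2 : HasDerivAt f (deriv f ((t:ℂ) * w)) ((t:ℂ) * w) :=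
      (hf.differentiableAt (hopen.mem_nhds (hmem t ht))).hasDerivAt
    exact (HasDerivAt.comp ((t:ℝ):ℂ) h2 h1).comp_ofReal
  have hcont : ContinuousOn (fun t : ℝ => deriv f ((t:ℂ) * w) * w) (Set.uIcc (0:ℝ) 1) := by
    apply ContinuousOn.mul _ continuousOn_const
    apply hdc.comp
    · exact (Continuous.mul (Complex.continuous_ofReal) continuous_const).continuousOn
    · intro t ht; exact hmem t ht
  have hint : IntervalIntegrable (fun t : ℝ => deriv f ((t:ℂ) * w) * w) volume 0 1 :=
    hcont.intervalIntegrable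
  have hftc : f w - f 0 = ∫ t in (0:ℝ)..1, deriv f ((t:ℂ) * w) * w := by
    have := intervalIntegral.integral_eq_sub_of_hasDerivAt hg hint
    rw [this]; norm_num
  set B : ℝ → ℝ := fun t => s * r / (1 - t^2 * r^2) with hB
  have hBpos : ∀ t : ℝ, t ∈ Set.uIcc (0:ℝ) 1 → 0 < 1 - t^2 * r^2 := by
    intro t ht
    rw [Set.uIcc_of_le (by norm_num : (0:ℝ) ≤ 1)] at ht
    have ht2 : t^2 ≤ 1 := by nlinarith [ht.1, ht.2]
    have hr2 : r^2 < 1 := by nlinarith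
    nlinarith [mul_le_mul_of_nonneg_right ht2 (sq_nonneg r)]
  have hBint : IntervalIntegrable B volume 0 1 := by
    apply ContinuousOn.intervalIntegrable
    apply ContinuousOn.div continuousOn_const
    · fun_prop
    · intro t ht; exact (hBpos t ht).ne'
  have hae : ∀ᵐ (t : ℝ) ∂(volume.restrict (Set.uIoc (0:ℝ) 1)),
      ‖deriv f ((t:ℂ) * w) * w‖ ≤ B t := by
    rw [Set.uIoc_of_le (by norm_num : (0:ℝ) ≤ 1)]
    apply MeasureTheory.ae_restrict_of_forall_mem measurableSet_Ioc
    intro t ht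
    have ht' : t ∈ Set.uIcc (0:ℝ) 1 := by
      rw [Set.uIcc_of_le (by norm_num : (0:ℝ) ≤ 1)]
      exact ⟨le_of_lt ht.1, ht.2⟩
    have hmem' := hmem t ht'
    have hd := hs _ hmem'
    have hpos := one_sub_sq_pos hmem'
    have hnorm : ‖(t:ℂ) * w‖ = t * r := by
      rw [norm_mul, Complex.norm_real, Real.norm_eq_abs, _root_.abs_of_nonneg (le_of_lt ht.1)]
    rw [norm_mul, hB]
    simp only
    rw [le_div_iff₀ (hBpos t ht')]
    rw [hnorm] at hd hpos
    nlinarith [norm_nonneg (deriv f ((t:ℂ) * w)), hd, hr0, ht.1.le, ht.2]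
  have hFder : ∀ t : ℝ, t ∈ Set.uIcc (0:ℝ) 1 →
      HasDerivAt (fun t : ℝ => s * (1/2) * (Real.log (1 + t*r) - Real.log (1 - t*r))) (B t) t := by
    intro t ht
    have h3 : 0 < 1 - t^2 * r^2 := hBpos t ht
    rw [Set.uIcc_of_le (by norm_num : (0:ℝ) ≤ 1)] at ht
    have h1 : (0:ℝ) < 1 + t*r := by nlinarith [ht.1, ht.2]
    have h2 : (0:ℝ) < 1 - t*r := by nlinarith [ht.1, ht.2]
    have hd1 : HasDerivAt (fun t : ℝ => Real.log (1 + t*r)) ((1 + t*r)⁻¹ * r) t := by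
      have hin : HasDerivAt (fun t : ℝ => 1 + t*r) r t := by
        simpa using ((hasDerivAt_id t).mul_const r).const_add 1
      exact (Real.hasDerivAt_log h1.ne').comp t hin
    have hd2 : HasDerivAt (fun t : ℝ => Real.log (1 - t*r)) ((1 - t*r)⁻¹ * (-r)) t := by
      have hin : HasDerivAt (fun t : ℝ => 1 - t*r) (-r) t := by
        simpa using ((hasDerivAt_id t).mul_const r).const_sub 1
      exact (Real.hasDerivAt_log h2.ne').comp t hin
    have hD := ((hd1.sub hd2).const_mul (s * (1/2)))
    convert! hD using 1
    rw [hB]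
    simp only
    have hfac : (1:ℝ) - t^2 * r^2 = (1 + t*r) * (1 - t*r) := by ring
    rw [hfac, div_eq_iff (mul_pos h1 h2).ne']
    have e1 : (1 + t*r)⁻¹ * (1 + t*r) = 1 := inv_mul_cancel₀ h1.ne'
    have e2 : (1 - t*r)⁻¹ * (1 - t*r) = 1 := inv_mul_cancel₀ h2.ne'
    linear_combination (-(s * r) / 2 * (1 - t*r)) * e1 + (-(s*r)/2 * (1 + t*r)) * e2
  have hcalc : ∫ t in (0:ℝ)..1, B t =
      s * ((1/2) * Real.log ((1 + r)/(1 - r))) := by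
    rw [intervalIntegral.integral_eq_sub_of_hasDerivAt hFder hBint]
    rw [Real.log_div (by nlinarith) (by nlinarith)]
    norm_num
    ring
  have hA0 : 0 ≤ (1/2) * Real.log ((1 + r)/(1 - r)) := by
    have h1 : (1:ℝ) ≤ (1+r)/(1-r) := by
      rw [le_div_iff₀ (by nlinarith)]; nlinarith
    exact mul_nonneg (by norm_num) (Real.log_nonneg h1)
  rw [hftc]
  refine le_trans (intervalIntegral.norm_integral_le_abs_of_norm_le hae hBint) ?_
  rw [hcalc]
  exact le_of_eq (_root_.abs_of_nonneg (mul_nonneg hs0 hA0))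

lemma bloch_pointwise {f : ℂ → ℂ} (hf : InBloch f) {z : ℂ} (hz : z ∈ D1) :
    ‖f z‖ ≤ blochNorm f * logWeight z := by
  have hgr := growth hf.1 (fun w hw => le_blochSemi hf hw) hz
  have h1 := one_le_logWeight hz
  have h2 := A_le_logWeight hz
  have h3 := blochSemi_nonneg f
  have h4 := norm_nonneg (f 0)
  have h5 : ‖f z‖ ≤ ‖f 0‖ + ‖f z - f 0‖ := by
    simpa using norm_add_le (f 0) (f z - f 0)
  rw [blochNorm]
  nlinarith [mul_le_mul_of_nonneg_left h2 h3, mul_le_mul_of_nonneg_left h1 h4]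

lemma comp_good {f h : ℂ → ℂ} (hf : InBloch f) (hh : Good h) :
    InBloch (f ∘ h) ∧ ∀ z ∈ D1, (1 - ‖z‖^2) * ‖deriv (f ∘ h) z‖ ≤ blochSemi f := by
  have key : ∀ z ∈ D1,
      ((1 - ‖z‖^2) * ‖deriv (f ∘ h) z‖ ≤ blochSemi f) ∧ DifferentiableAt ℂ (f ∘ h) z := by
    intro z hz
    obtain ⟨hm, d, hd, hsp⟩ := hh z hz
    have hfd : HasDerivAt f (deriv f (h z)) (h z) :=
      (hf.1.differentiableAt (Metric.isOpen_ball.mem_nhds hm)).hasDerivAt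
    have hcomp : HasDerivAt (f ∘ h) (deriv f (h z) * d) z := hfd.comp z hd
    refine ⟨?_, hcomp.differentiableAt⟩
    rw [hcomp.deriv, norm_mul]
    calc (1 - ‖z‖^2) * (‖deriv f (h z)‖ * ‖d‖)
        = (‖d‖ * (1 - ‖z‖^2)) * ‖deriv f (h z)‖ := by ring
    _ = (1 - ‖h z‖^2) * ‖deriv f (h z)‖ := by rw [← hsp]
    _ ≤ blochSemi f := le_blochSemi hf hm
  exact ⟨⟨fun z hz => ((key z hz).2).differentiableWithinAt,
    ⟨blochSemi f, fun z hz => (key z hz).1⟩⟩, fun z hz => (key z hz).1⟩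

lemma opNormBtoHv1_spec (u : ℂ → ℂ) {C0 : ℝ} (h0 : 0 ≤ C0)
    (hC0 : ∀ f, InBloch f → ∀ z ∈ D1,
      (1 - ‖z‖ ^ 2) * ‖deriv u z * f z‖ ≤ C0 * blochNorm f) :
    0 ≤ opNormBtoHv1 u ∧ ∀ f, InBloch f → ∀ z ∈ D1,
      (1 - ‖z‖ ^ 2) * ‖deriv u z * f z‖ ≤ opNormBtoHv1 u * blochNorm f := by
  have hne : {C : ℝ | 0 ≤ C ∧ ∀ f, InBloch f → ∀ z ∈ D1,
      (1 - ‖z‖ ^ 2) * ‖deriv u z * f z‖ ≤ C * blochNorm f}.Nonempty := ⟨C0, h0, hC0⟩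
  have hNpos : 0 ≤ opNormBtoHv1 u := by
    unfold opNormBtoHv1
    exact le_csInf hne fun C hC => hC.1
  refine ⟨hNpos, fun f hf z hz => ?_⟩
  have hbf := blochNorm_nonneg f
  rcases eq_or_lt_of_le hbf with h0' | h0'
  · have h := hC0 f hf z hz
    rw [← h0'] at h ⊢
    simpa using h
  · have hdiv : (1 - ‖z‖ ^ 2) * ‖deriv u z * f z‖ / blochNorm f ≤ opNormBtoHv1 u := by
      unfold opNormBtoHv1
      exact le_csInf hne fun C hC => (div_le_iff₀ h0').mpr (hC.2 f hf z hz)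
    exact (div_le_iff₀ h0').mp hdiv


/-- norm estimate for M_{u_{(n)}} on the Bloch space. -/
theorem stmt_13 (u φ : ℂ → ℂ) (lam a : ℂ) (hu : AnalyticOnD u)
    (hb : BoundedAwayFromZero u) (hm : MultBChar u)
    (hlam : ‖lam‖ = 1) (ha : a ∈ D1)
    (hφ : ∀ z, φ z = lam * (a - z) / (1 - (starRingEnd ℂ) a * z)) :
    ∀ n : ℕ, 1 ≤ n →
      opNormB (mult (wprod u φ n)) ≤
        (opNormBtoHv1 u * supNormD (fun z => (u z)⁻¹) + 2) * n *
          (1 + n * hypDist a 0) * supNormD (wprod u φ n) := by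
  intro n hn
  obtain ⟨δ, hδ0, hδ⟩ := hb
  obtain ⟨Mb, hMb⟩ := hm.1
  obtain ⟨Ml, hMl⟩ := hm.2
  have hopen : IsOpen D1 := Metric.isOpen_ball
  have hlne : lam ≠ 0 := by intro h; rw [h] at hlam; simp at hlam
  have hGφ : Good φ := by
    have hfe : φ = fun z => lam * (a - z) / (1 - (starRingEnd ℂ) a * z) := funext hφ
    rw [hfe]; exact good_mobius hlam ha
  set ψ : ℂ → ℂ := fun w => (lam * a - w) / (lam - (starRingEnd ℂ) a * w) with hψdef
  have hGψ : Good ψ := by rw [hψdef]; exact good_psi hlam ha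
  have hGφj : ∀ j : ℕ, Good (φ^[j]) := hGφ.iterate
  have hGψj : ∀ j : ℕ, Good (ψ^[j]) := hGψ.iterate
  have hinv : ∀ z ∈ D1, ψ (φ z) = z := by
    intro z hz; rw [hψdef, hφ z]; exact psi_phi hlam ha hz
  have hinvj : ∀ (j : ℕ), ∀ z ∈ D1, ψ^[j] (φ^[j] z) = z := by
    intro j
    induction j with
    | zero => intro z hz; simp
    | succ j ih =>
      intro z hz
      rw [Function.iterate_succ_apply' (f := φ), Function.iterate_succ_apply (f := ψ)]
      rw [hinv _ ((hGφj j z hz).1)]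
      exact ih z hz
  have hρeq : hypDist a 0 = (1/2) * Real.log ((1 + ‖a‖)/(1 - ‖a‖)) := by
    simp [hypDist]
  have hρ0 : 0 ≤ hypDist a 0 := by
    rw [hρeq]
    have h1 : ‖a‖ < 1 := mem_D1.mp ha
    have h2 : (1:ℝ) ≤ (1 + ‖a‖)/(1 - ‖a‖) := by
      rw [le_div_iff₀ (by linarith)]
      nlinarith [norm_nonneg a]
    exact mul_nonneg (by norm_num) (Real.log_nonneg h2)
  have hψ0 : ψ 0 = a := by
    rw [hψdef]
    simp only
    rw [mul_zero, sub_zero, sub_zero, mul_comm, mul_div_assoc, div_self hlne, mul_one]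
  -- telescoping estimate along the backward orbit
  have htel : ∀ f, InBloch f → ∀ j : ℕ,
      ‖f (ψ^[j] 0) - f 0‖ ≤ j * (blochSemi f * hypDist a 0) := by
    intro f hf j
    induction j with
    | zero => simp
    | succ j ih =>
      have hg := comp_good hf (hGψj j)
      have hgrow := growth hg.1.1 hg.2 ha
      have h1 : (f ∘ ψ^[j]) a - (f ∘ ψ^[j]) 0 = f (ψ^[j+1] 0) - f (ψ^[j] 0) := by
        rw [Function.comp_apply, Function.comp_apply, Function.iterate_succ_apply, hψ0]
      rw [h1, ← hρeq] at hgrow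
      have htri := dist_triangle (f (ψ^[j+1] 0)) (f (ψ^[j] 0)) (f 0)
      rw [dist_eq_norm, dist_eq_norm, dist_eq_norm] at htri
      push_cast
      calc ‖f (ψ^[j+1] 0) - f 0‖
          ≤ ‖f (ψ^[j+1] 0) - f (ψ^[j] 0)‖ + ‖f (ψ^[j] 0) - f 0‖ := htri
      _ ≤ blochSemi f * hypDist a 0 + j * (blochSemi f * hypDist a 0) := by
          apply add_le_add hgrow
          exact_mod_cast ih
      _ = ((j:ℝ)+1) * (blochSemi f * hypDist a 0) := by ring
  -- composition operator bound
  have hcompnorm : ∀ f, InBloch f → ∀ j : ℕ, j ≤ n →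
      blochNorm (f ∘ ψ^[j]) ≤ (1 + (n:ℝ) * hypDist a 0) * blochNorm f := by
    intro f hf j hj
    have hg := comp_good hf (hGψj j)
    have hsemi : blochSemi (f ∘ ψ^[j]) ≤ blochSemi f := blochSemi_le hg.2
    have hval : ‖f (ψ^[j] 0)‖ ≤ ‖f 0‖ + j * (blochSemi f * hypDist a 0) := by
      have h2 := htel f hf j
      have h5 : ‖f (ψ^[j] 0)‖ ≤ ‖f 0‖ + ‖f (ψ^[j] 0) - f 0‖ := by
        simpa using norm_add_le (f 0) (f (ψ^[j] 0) - f 0)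
      linarith
    have hjn : (j:ℝ) ≤ (n:ℝ) := by exact_mod_cast hj
    have hb0 := blochSemi_nonneg f
    have hf0 := norm_nonneg (f 0)
    have heq : blochNorm (f ∘ ψ^[j]) = ‖f (ψ^[j] 0)‖ + blochSemi (f ∘ ψ^[j]) := rfl
    rw [heq, blochNorm]
    have e1 : 0 ≤ (n:ℝ) * hypDist a 0 * ‖f 0‖ :=
      mul_nonneg (mul_nonneg (Nat.cast_nonneg n) hρ0) hf0
    have e2 : 0 ≤ ((n:ℝ) - j) * hypDist a 0 * blochSemi f :=
      mul_nonneg (mul_nonneg (by linarith) hρ0) hb0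
    nlinarith [hval, hsemi, e1, e2]
  -- the multiplier norm of u' from B to H^infty_{v1}
  have hNex : ∀ f, InBloch f → ∀ z ∈ D1,
      (1 - ‖z‖ ^ 2) * ‖deriv u z * f z‖ ≤ max Ml 0 * blochNorm f := by
    intro f hf z hz
    have hfz := bloch_pointwise hf hz
    have hlog := hMl z hz
    have hpos := one_sub_sq_pos hz
    have hb0 := blochNorm_nonneg f
    rw [norm_mul]
    have hP : 0 ≤ (1 - ‖z‖^2) * ‖deriv u z‖ :=
      mul_nonneg (le_of_lt hpos) (norm_nonneg _)
    calc (1 - ‖z‖^2) * (‖deriv u z‖ * ‖f z‖)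
        = ((1 - ‖z‖^2) * ‖deriv u z‖) * ‖f z‖ := by ring
    _ ≤ ((1 - ‖z‖^2) * ‖deriv u z‖) * (blochNorm f * logWeight z) :=
        mul_le_mul_of_nonneg_left hfz hP
    _ = ((1 - ‖z‖^2) * ‖deriv u z‖ * logWeight z) * blochNorm f := by ring
    _ ≤ max Ml 0 * blochNorm f :=
        mul_le_mul_of_nonneg_right (le_trans hlog (le_max_left _ _)) hb0
  have hNall := opNormBtoHv1_spec u (le_max_right Ml 0) hNex
  set N := opNormBtoHv1 u with hNdef
  have hN0 : 0 ≤ N := hNall.1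
  have hNspec := hNall.2
  set U := supNormD (fun z => (u z)⁻¹) with hUdef
  set W := supNormD (wprod u φ n) with hWdef
  have hU0 : 0 ≤ U := supNormD_nonneg _
  have hW0 : 0 ≤ W := supNormD_nonneg _
  have hune : ∀ y ∈ D1, u y ≠ 0 := by
    intro y hy h
    have := hδ y hy
    rw [h] at this; simp at this; linarith
  have hUb : ∀ y ∈ D1, ‖(u y)⁻¹‖ ≤ δ⁻¹ := by
    intro y hy
    rw [norm_inv]
    exact inv_anti₀ hδ0 (hδ y hy)
  have hUle : ∀ y ∈ D1, ‖(u y)⁻¹‖ ≤ U := fun y hy =>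
    le_supNormD (f := fun z => (u z)⁻¹) hUb hy
  have hWbd : ∀ z ∈ D1, ‖wprod u φ n z‖ ≤ max Mb 0 ^ n := by
    intro z hz
    have : ‖wprod u φ n z‖ = ∏ j ∈ Finset.range n, ‖u (φ^[j] z)‖ := by
      rw [wprod]; exact norm_prod _ _
    rw [this]
    calc ∏ j ∈ Finset.range n, ‖u (φ^[j] z)‖ ≤ ∏ _j ∈ Finset.range n, max Mb 0 := by
          apply Finset.prod_le_prod (fun j _ => norm_nonneg _)
          intro j _
          exact le_trans (hMb _ ((hGφj j z hz).1)) (le_max_left _ _)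
    _ = max Mb 0 ^ n := by rw [Finset.prod_const, Finset.card_range]
  have hWle : ∀ z ∈ D1, ‖wprod u φ n z‖ ≤ W := fun z hz => le_supNormD hWbd hz
  have hn1 : (1:ℝ) ≤ (n:ℝ) := by exact_mod_cast hn
  have hfact : (0:ℝ) ≤ 1 + (n:ℝ) * hypDist a 0 := by
    nlinarith [mul_nonneg (Nat.cast_nonneg n : (0:ℝ) ≤ n) hρ0]
  set C₀ := (N * U + 2) * (n:ℝ) * (1 + (n:ℝ) * hypDist a 0) * W with hC₀def
  have hC₀0 : 0 ≤ C₀ := by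
    rw [hC₀def]
    apply mul_nonneg (mul_nonneg (mul_nonneg _ (by linarith)) hfact) hW0
    nlinarith [mul_nonneg hN0 hU0]
  have hbound : ∀ f, InBloch f → blochNorm (mult (wprod u φ n) f) ≤ C₀ * blochNorm f := by
    intro f hf
    have hbf := blochNorm_nonneg f
    have hsf := blochSemi_nonneg f
    have hsfle : blochSemi f ≤ blochNorm f := by
      have := norm_nonneg (f 0)
      rw [blochNorm]; linarith
    have hconst : ‖mult (wprod u φ n) f 0‖ ≤ W * blochNorm f := by
      have h1 : ‖wprod u φ n 0‖ ≤ W := hWle 0 zero_mem_D1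
      have h2 : ‖f 0‖ ≤ blochNorm f := by
        have := blochSemi_nonneg f
        rw [blochNorm]; linarith
      calc ‖mult (wprod u φ n) f 0‖ = ‖wprod u φ n 0‖ * ‖f 0‖ := norm_mul _ _
      _ ≤ W * blochNorm f := mul_le_mul h1 h2 (norm_nonneg _) hW0
    have hsemib : blochSemi (mult (wprod u φ n) f) ≤
        (n:ℝ) * (W * U * (N * ((1 + (n:ℝ) * hypDist a 0) * blochNorm f))) + W * blochNorm f := by
      apply blochSemi_le
      intro z hz
      have H : ∀ j : ℕ, j ∈ Finset.range n → ∃ d : ℂ,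
          HasDerivAt (fun x => u (φ^[j] x)) d z ∧
          (1 - ‖z‖^2) * ‖d‖ = (1 - ‖φ^[j] z‖^2) * ‖deriv u (φ^[j] z)‖ := by
        intro j _
        obtain ⟨hmz, dj, hdj, hspj⟩ := hGφj j z hz
        have hud : HasDerivAt u (deriv u (φ^[j] z)) (φ^[j] z) :=
          (hu.differentiableAt (hopen.mem_nhds hmz)).hasDerivAt
        refine ⟨deriv u (φ^[j] z) * dj, hud.comp z hdj, ?_⟩
        rw [norm_mul, hspj]
        ring
      choose! dd hdd hspd using H
      have hwder : HasDerivAt (wprod u φ n)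
          (∑ j ∈ Finset.range n, (∏ k ∈ (Finset.range n).erase j, u (φ^[k] z)) • dd j) z := by
        exact HasDerivAt.fun_finsetProd (x := z) (u := Finset.range n)
          (f := fun j x => u (φ^[j] x)) (f' := dd) hdd
      set W' : ℂ := ∑ j ∈ Finset.range n,
        (∏ k ∈ (Finset.range n).erase j, u (φ^[k] z)) • dd j with hW'def
      have hfder : HasDerivAt f (deriv f z) z :=
        (hf.1.differentiableAt (hopen.mem_nhds hz)).hasDerivAt
      have hmder : HasDerivAt (mult (wprod u φ n) f)
          (W' * f z + wprod u φ n z * deriv f z) z := hwder.mul hfder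
      rw [hmder.deriv]
      have hterm : ∀ j ∈ Finset.range n,
          (1 - ‖z‖^2) * (‖(∏ k ∈ (Finset.range n).erase j, u (φ^[k] z)) • dd j‖ * ‖f z‖) ≤
          W * U * (N * ((1 + (n:ℝ) * hypDist a 0) * blochNorm f)) := by
        intro j hj
        have hjz : φ^[j] z ∈ D1 := (hGφj j z hz).1
        have hjn : j ≤ n := le_of_lt (Finset.mem_range.mp hj)
        have hprodle : ‖∏ k ∈ (Finset.range n).erase j, u (φ^[k] z)‖ ≤ U * W := by
          have hmul := Finset.mul_prod_erase (Finset.range n) (fun k => u (φ^[k] z)) hj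
          have heq : ∏ k ∈ (Finset.range n).erase j, u (φ^[k] z) =
              (u (φ^[j] z))⁻¹ * wprod u φ n z := by
            rw [wprod]
            rw [← hmul, inv_mul_cancel_left₀ (hune _ hjz)]
          rw [heq, norm_mul]
          exact mul_le_mul (hUle _ hjz) (hWle _ hz) (norm_nonneg _) hU0
        have hg := comp_good hf (hGψj j)
        have hNj := hNspec (f ∘ ψ^[j]) hg.1 (φ^[j] z) hjz
        have hfzeq : (f ∘ ψ^[j]) (φ^[j] z) = f z := by
          rw [Function.comp_apply, hinvj j z hz]
        rw [hfzeq] at hNj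
        have hcb := hcompnorm f hf j hjn
        have hkey : (1 - ‖z‖^2) * (‖dd j‖ * ‖f z‖) ≤
            N * ((1 + (n:ℝ) * hypDist a 0) * blochNorm f) := by
          have h1 : (1 - ‖z‖^2) * (‖dd j‖ * ‖f z‖) =
              (1 - ‖φ^[j] z‖^2) * ‖deriv u (φ^[j] z) * f z‖ := by
            rw [norm_mul]
            linear_combination ‖f z‖ * hspd j hj
          rw [h1]
          calc (1 - ‖φ^[j] z‖^2) * ‖deriv u (φ^[j] z) * f z‖
              ≤ N * blochNorm (f ∘ ψ^[j]) := hNj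
          _ ≤ N * ((1 + (n:ℝ) * hypDist a 0) * blochNorm f) :=
              mul_le_mul_of_nonneg_left hcb hN0
        rw [smul_eq_mul, norm_mul]
        calc (1 - ‖z‖^2) * (‖∏ k ∈ (Finset.range n).erase j, u (φ^[k] z)‖ * ‖dd j‖ * ‖f z‖)
            = ‖∏ k ∈ (Finset.range n).erase j, u (φ^[k] z)‖ *
              ((1 - ‖z‖^2) * (‖dd j‖ * ‖f z‖)) := by ring
        _ ≤ (U * W) * (N * ((1 + (n:ℝ) * hypDist a 0) * blochNorm f)) := by
            apply mul_le_mul hprodle hkey _ (mul_nonneg hU0 hW0)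
            exact mul_nonneg (le_of_lt (one_sub_sq_pos hz))
              (mul_nonneg (norm_nonneg _) (norm_nonneg _))
        _ = W * U * (N * ((1 + (n:ℝ) * hypDist a 0) * blochNorm f)) := by ring
      have hsum : (1 - ‖z‖^2) * (‖W'‖ * ‖f z‖) ≤
          (n:ℝ) * (W * U * (N * ((1 + (n:ℝ) * hypDist a 0) * blochNorm f))) := by
        have hnorms : ‖W'‖ ≤ ∑ j ∈ Finset.range n,
            ‖(∏ k ∈ (Finset.range n).erase j, u (φ^[k] z)) • dd j‖ := by
          rw [hW'def]; exact norm_sum_le _ _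
        calc (1 - ‖z‖^2) * (‖W'‖ * ‖f z‖)
            ≤ (1 - ‖z‖^2) * ((∑ j ∈ Finset.range n,
              ‖(∏ k ∈ (Finset.range n).erase j, u (φ^[k] z)) • dd j‖) * ‖f z‖) := by
              apply mul_le_mul_of_nonneg_left _ (le_of_lt (one_sub_sq_pos hz))
              exact mul_le_mul_of_nonneg_right hnorms (norm_nonneg _)
        _ = ∑ j ∈ Finset.range n, (1 - ‖z‖^2) *
              (‖(∏ k ∈ (Finset.range n).erase j, u (φ^[k] z)) • dd j‖ * ‖f z‖) := by
              rw [Finset.sum_mul, Finset.mul_sum]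
        _ ≤ ∑ _j ∈ Finset.range n,
              W * U * (N * ((1 + (n:ℝ) * hypDist a 0) * blochNorm f)) :=
            Finset.sum_le_sum hterm
        _ = (n:ℝ) * (W * U * (N * ((1 + (n:ℝ) * hypDist a 0) * blochNorm f))) := by
            rw [Finset.sum_const, Finset.card_range, nsmul_eq_mul]
      calc (1 - ‖z‖^2) * ‖W' * f z + wprod u φ n z * deriv f z‖
          ≤ (1 - ‖z‖^2) * (‖W' * f z‖ + ‖wprod u φ n z * deriv f z‖) :=
            mul_le_mul_of_nonneg_left (norm_add_le _ _) (le_of_lt (one_sub_sq_pos hz))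
      _ = (1 - ‖z‖^2) * (‖W'‖ * ‖f z‖) +
            ‖wprod u φ n z‖ * ((1 - ‖z‖^2) * ‖deriv f z‖) := by
            rw [norm_mul, norm_mul]; ring
      _ ≤ (n:ℝ) * (W * U * (N * ((1 + (n:ℝ) * hypDist a 0) * blochNorm f))) +
            W * blochNorm f := by
            apply add_le_add hsum
            have h1 := le_blochSemi hf hz
            have h2 := hWle z hz
            calc ‖wprod u φ n z‖ * ((1 - ‖z‖^2) * ‖deriv f z‖)
                ≤ W * blochSemi f := by
                  apply mul_le_mul h2 h1 _ hW0
                  exact mul_nonneg (le_of_lt (one_sub_sq_pos hz)) (norm_nonneg _)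
            _ ≤ W * blochNorm f := mul_le_mul_of_nonneg_left hsfle hW0
    have heq2 : blochNorm (mult (wprod u φ n) f) =
        ‖mult (wprod u φ n) f 0‖ + blochSemi (mult (wprod u φ n) f) := rfl
    rw [heq2]
    have hq1 : (1:ℝ) ≤ (n:ℝ) * (1 + (n:ℝ) * hypDist a 0) := by
      nlinarith [mul_nonneg (mul_nonneg (Nat.cast_nonneg n : (0:ℝ) ≤ n) (Nat.cast_nonneg n)) hρ0]
    have hfin : W * blochNorm f +
        ((n:ℝ) * (W * U * (N * ((1 + (n:ℝ) * hypDist a 0) * blochNorm f))) + W * blochNorm f)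
        ≤ C₀ * blochNorm f := by
      rw [hC₀def]
      nlinarith [mul_nonneg (mul_nonneg hW0 hbf)
        (sub_nonneg.mpr hq1), mul_nonneg hN0 hU0, hfact, hρ0,
        mul_nonneg (mul_nonneg hW0 hbf) hfact]
    linarith [hconst, hsemib]
  have hle : opNormB (mult (wprod u φ n)) ≤ C₀ := by
    unfold opNormB
    exact csInf_le ⟨0, fun C hC => hC.1⟩ ⟨hC₀0, hbound⟩
  calc opNormB (mult (wprod u φ n)) ≤ C₀ := hle
  _ = (N * U + 2) * (n:ℝ) * (1 + (n:ℝ) * hypDist a 0) * W := hC₀def
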